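/- arXiv:2509.22235 — 5 statements merged into one kernel-verified Lean document; each statement's English description precedes it below -/
import Mathlib

section
/- Let Γ̂ be a symmetric q×q matrix, γ̂ ∈ ℝ^q, and β* ∈ ℝ^q with support S of size s. Suppose (i) |γ̂ − Γ̂ β*|_∞ ≤ λ/4 for some λ > 0, and (ii) the restricted eigenvalue condition vᵀ Γ̂ v ≥ κ |v|₂² holds for all v with |v_{S^c}|₁ ≤ 3|v_S|₁, where κ > 0. Then any minimizer β̂ of β ↦ βᵀ Γ̂ β − 2 βᵀ γ̂ + λ|β|₁ satisfies |β̂ − β*|₂ ≤ 8λ√s/κ and |β̂ − β*|₁ ≤ 32 λ s / κ. -/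
open Matrix

/-- Lasso estimation error bounds under a deviation bound and a restricted
eigenvalue condition. -/
theorem lasso_error_bounds {q : ℕ} (Γhat : Matrix (Fin q) (Fin q) ℝ)
    (hsym : Γhat.IsSymm) (hpsd : Γhat.PosSemidef)
    (γhat βstar : Fin q → ℝ) (lam κ : ℝ) (hlam : 0 < lam) (hκ : 0 < κ)
    (S : Finset (Fin q)) (hS : ∀ i, i ∈ S ↔ βstar i ≠ 0)
    (s : ℕ) (hs : S.card = s)
    (hdev : ∀ i, |γhat i - Γhat.mulVec βstar i| ≤ lam / 4)
    (hRE : ∀ v : Fin q → ℝ, (∑ i ∈ Sᶜ, |v i|) ≤ 3 * ∑ i ∈ S, |v i| →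
      v ⬝ᵥ Γhat.mulVec v ≥ κ * ∑ i, (v i) ^ 2)
    (βhat : Fin q → ℝ)
    (hmin : ∀ β : Fin q → ℝ,
      βhat ⬝ᵥ Γhat.mulVec βhat - 2 * (βhat ⬝ᵥ γhat) + lam * ∑ i, |βhat i| ≤
        β ⬝ᵥ Γhat.mulVec β - 2 * (β ⬝ᵥ γhat) + lam * ∑ i, |β i|) :
    Real.sqrt (∑ i, (βhat i - βstar i) ^ 2) ≤ 8 * lam * Real.sqrt s / κ ∧
      (∑ i, |βhat i - βstar i|) ≤ 32 * lam * s / κ := by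
  obtain ⟨v, hv⟩ : ∃ w : Fin q → ℝ, w = βhat - βstar := ⟨_, rfl⟩
  have hvi : ∀ i, v i = βhat i - βstar i := fun i => by rw [hv]; rfl
  set a := ∑ i ∈ S, |v i| with hadef
  set b := ∑ i ∈ Sᶜ, |v i| with hbdef
  have ha0 : 0 ≤ a := hadef ▸ Finset.sum_nonneg fun i _ => abs_nonneg _
  have hb0 : 0 ≤ b := hbdef ▸ Finset.sum_nonneg fun i _ => abs_nonneg _
  -- symmetry of the bilinear form
  have hsymB : βstar ⬝ᵥ Γhat.mulVec βhat = βhat ⬝ᵥ Γhat.mulVec βstar := by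
    rw [Matrix.dotProduct_mulVec, ← Matrix.mulVec_transpose, hsym, dotProduct_comm]
  have expand : v ⬝ᵥ Γhat.mulVec v =
      βhat ⬝ᵥ Γhat.mulVec βhat - 2 * (βhat ⬝ᵥ Γhat.mulVec βstar)
        + βstar ⬝ᵥ Γhat.mulVec βstar := by
    rw [hv]
    simp only [Matrix.mulVec_sub, sub_dotProduct, dotProduct_sub]
    linarith [hsymB]
  have hd : v ⬝ᵥ (γhat - Γhat.mulVec βstar) =
      βhat ⬝ᵥ γhat - βstar ⬝ᵥ γhat
        - (βhat ⬝ᵥ Γhat.mulVec βstar) + βstar ⬝ᵥ Γhat.mulVec βstar := by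
    rw [hv]
    simp only [sub_dotProduct, dotProduct_sub]
    ring
  -- basic inequality from minimality
  have step1 : v ⬝ᵥ Γhat.mulVec v ≤ 2 * (v ⬝ᵥ (γhat - Γhat.mulVec βstar))
      + lam * ((∑ i, |βstar i|) - ∑ i, |βhat i|) := by
    have h1 := hmin βstar
    rw [expand, hd]
    nlinarith [h1]
  -- deviation bound
  have habs : a + b = ∑ i, |v i| := by
    rw [hadef, hbdef]; exact Finset.sum_add_sum_compl S _
  have step2 : v ⬝ᵥ (γhat - Γhat.mulVec βstar) ≤ lam / 4 * (a + b) := by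
    rw [habs, dotProduct, Finset.mul_sum]
    apply Finset.sum_le_sum
    intro i _
    have h1 : v i * (γhat - Γhat.mulVec βstar) i ≤ |v i| * |γhat i - Γhat.mulVec βstar i| := by
      calc v i * (γhat - Γhat.mulVec βstar) i ≤ |v i * (γhat - Γhat.mulVec βstar) i| :=
            le_abs_self _
        _ = |v i| * |γhat i - Γhat.mulVec βstar i| := by rw [abs_mul]; rfl
    calc v i * (γhat - Γhat.mulVec βstar) i ≤ |v i| * (lam / 4) :=
          h1.trans (mul_le_mul_of_nonneg_left (hdev i) (abs_nonneg _))
      _ = lam / 4 * |v i| := by ring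
  -- ℓ¹ comparison
  have e0 : ∀ i ∈ Sᶜ, βstar i = 0 := by
    intro i hi
    simp only [Finset.mem_compl] at hi
    by_contra h
    exact hi ((hS i).mpr h)
  have step3 : (∑ i, |βstar i|) - ∑ i, |βhat i| ≤ a - b := by
    have e1 : ∑ i ∈ Sᶜ, |βstar i| = 0 := by
      apply Finset.sum_eq_zero
      intro i hi
      rw [e0 i hi, abs_zero]
    have e2 : ∑ i ∈ Sᶜ, |βhat i| = b := by
      rw [hbdef]
      apply Finset.sum_congr rfl
      intro i hi
      rw [hvi i, e0 i hi, sub_zero]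
    have e3 : (∑ i ∈ S, |βstar i|) - ∑ i ∈ S, |βhat i| ≤ a := by
      rw [hadef, ← Finset.sum_sub_distrib]
      apply Finset.sum_le_sum
      intro i _
      calc |βstar i| - |βhat i| ≤ |βstar i - βhat i| := abs_sub_abs_le_abs_sub _ _
        _ = |v i| := by rw [hvi i, abs_sub_comm]
    have s1 : (∑ i ∈ S, |βstar i|) + ∑ i ∈ Sᶜ, |βstar i| = ∑ i, |βstar i| :=
      Finset.sum_add_sum_compl S _
    have s2 : (∑ i ∈ S, |βhat i|) + ∑ i ∈ Sᶜ, |βhat i| = ∑ i, |βhat i| :=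
      Finset.sum_add_sum_compl S _
    linarith
  have key : v ⬝ᵥ Γhat.mulVec v ≤ 3 * lam / 2 * a - lam / 2 * b := by
    nlinarith [step1, step2, step3]
  have hnn : 0 ≤ v ⬝ᵥ Γhat.mulVec v := by
    have := hpsd.dotProduct_mulVec_nonneg v
    simpa using this
  have hb3a : b ≤ 3 * a := by nlinarith [key, hnn, hlam]
  have hre : v ⬝ᵥ Γhat.mulVec v ≥ κ * ∑ i, (v i) ^ 2 := by
    apply hRE v
    rw [← hadef, ← hbdef]
    exact hb3a
  set T := ∑ i, (v i) ^ 2 with hTdef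
  have hT0 : 0 ≤ T := hTdef ▸ Finset.sum_nonneg fun i _ => sq_nonneg _
  set N := Real.sqrt T with hNdef
  have hN0 : 0 ≤ N := hNdef ▸ Real.sqrt_nonneg _
  have hNT : N * N = T := hNdef ▸ Real.mul_self_sqrt hT0
  have hs0 : (0:ℝ) ≤ (s:ℝ) := Nat.cast_nonneg _
  have hss : Real.sqrt s * Real.sqrt s = (s:ℝ) := Real.mul_self_sqrt hs0
  -- Cauchy–Schwarz: a ≤ √s * N
  have hcs : a ≤ Real.sqrt s * N := by
    have h1 : a ^ 2 ≤ (s:ℝ) * T := by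
      have hCS := Finset.sum_mul_sq_le_sq_mul_sq S (fun _ => (1:ℝ)) (fun i => |v i|)
      simp only [one_mul, one_pow, sq_abs] at hCS
      have hsub : ∑ i ∈ S, (v i) ^ 2 ≤ T := by
        rw [hTdef]
        apply Finset.sum_le_sum_of_subset_of_nonneg (Finset.subset_univ S)
        intro i _ _
        exact sq_nonneg _
      calc a ^ 2 ≤ (∑ _i ∈ S, (1:ℝ)) * ∑ i ∈ S, (v i) ^ 2 := by rw [hadef]; exact hCS
        _ = (s:ℝ) * ∑ i ∈ S, (v i) ^ 2 := by rw [Finset.sum_const, hs]; simp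
        _ ≤ (s:ℝ) * T := mul_le_mul_of_nonneg_left hsub hs0
    calc a = Real.sqrt (a ^ 2) := (Real.sqrt_sq ha0).symm
      _ ≤ Real.sqrt ((s:ℝ) * T) := Real.sqrt_le_sqrt h1
      _ = Real.sqrt s * N := by rw [hNdef]; exact Real.sqrt_mul hs0 T
  -- main bound: κ N ≤ (3/2) λ √s
  have hκT : κ * T ≤ 3 * lam / 2 * a := by
    have h0 : κ * T ≤ v ⬝ᵥ Γhat.mulVec v := by rw [hTdef]; exact hre
    nlinarith [key, hb0, hlam]
  clear hmin hRE hdev hre key hnn step1 step2 step3 expand hd hsymB e0 hS hpsd hsym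
  clear_value a b T N
  have hmain : κ * N ≤ 3 * lam / 2 * Real.sqrt s := by
    rcases eq_or_lt_of_le hN0 with h | h
    · rw [← h, mul_zero]
      positivity
    · have h2 : κ * (N * N) ≤ 3 * lam / 2 * (Real.sqrt s * N) := by
        rw [hNT]
        calc κ * T ≤ 3 * lam / 2 * a := hκT
          _ ≤ 3 * lam / 2 * (Real.sqrt s * N) :=
              mul_le_mul_of_nonneg_left hcs (by positivity)
      nlinarith [h]
  have hsqrtnn : (0:ℝ) ≤ Real.sqrt s := Real.sqrt_nonneg _
  constructor
  · have goal2 : N ≤ 8 * lam * Real.sqrt s / κ := by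
      rw [le_div_iff₀ hκ]
      linarith [hmain, mul_nonneg hlam.le hsqrtnn]
    have : Real.sqrt (∑ i, (βhat i - βstar i) ^ 2) = N := by
      rw [hNdef, hTdef]
      congr 1
      exact Finset.sum_congr rfl fun i _ => by rw [hvi i]
    rw [this]
    exact goal2
  · have goal1 : a + b ≤ 32 * lam * s / κ := by
      rw [le_div_iff₀ hκ]
      have h1 : a * κ ≤ Real.sqrt s * (κ * N) := by
        calc a * κ ≤ Real.sqrt s * N * κ := mul_le_mul_of_nonneg_right hcs hκ.le
          _ = Real.sqrt s * (κ * N) := by ring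
      have h2 : Real.sqrt s * (κ * N) ≤ 3 * lam / 2 * (s:ℝ) := by
        calc Real.sqrt s * (κ * N) ≤ Real.sqrt s * (3 * lam / 2 * Real.sqrt s) :=
              mul_le_mul_of_nonneg_left hmain hsqrtnn
          _ = 3 * lam / 2 * (Real.sqrt s * Real.sqrt s) := by ring
          _ = 3 * lam / 2 * (s:ℝ) := by rw [hss]
      linarith [h1, h2, mul_le_mul_of_nonneg_right hb3a hκ.le,
        mul_nonneg hlam.le hs0]
    have : ∑ i, |βhat i - βstar i| = a + b := by
      rw [habs]
      exact Finset.sum_congr rfl fun i _ => by rw [hvi i]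
    rw [this]
    exact goal1
end

section
/- Let β̂ be any minimizer of L(β) = βᵀ Γ̂ β − 2 βᵀ γ̂ + λ|β|₁ over ℝ^q, where Γ̂ is symmetric positive semidefinite, and let β* ∈ ℝ^q with support S. If |γ̂ − Γ̂ β*|_∞ ≤ λ/4, then the error vector v = β̂ − β* satisfies the cone condition |v_{S^c}|₁ ≤ 3 |v_S|₁ and the inequality vᵀ Γ̂ v ≤ 2λ |v|₁. -/
open Matrix

/-- Basic inequality for the Lasso: the error vector `v = β̂ − β*` lies in the
cone `|v_{S^c}|₁ ≤ 3|v_S|₁` and satisfies `vᵀ Γ̂ v ≤ 2λ|v|₁`. -/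
theorem lasso_cone_condition {q : ℕ} (Γhat : Matrix (Fin q) (Fin q) ℝ)
    (hsym : Γhat.IsSymm) (hpsd : Γhat.PosSemidef)
    (γhat βstar : Fin q → ℝ) (lam : ℝ) (hlam : 0 < lam)
    (S : Finset (Fin q)) (hS : ∀ i, i ∈ S ↔ βstar i ≠ 0)
    (hdev : ∀ i, |γhat i - Γhat.mulVec βstar i| ≤ lam / 4)
    (βhat : Fin q → ℝ)
    (hmin : ∀ β : Fin q → ℝ,
      βhat ⬝ᵥ Γhat.mulVec βhat - 2 * (βhat ⬝ᵥ γhat) + lam * ∑ i, |βhat i| ≤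
        β ⬝ᵥ Γhat.mulVec β - 2 * (β ⬝ᵥ γhat) + lam * ∑ i, |β i|) :
    (∑ i ∈ Sᶜ, |βhat i - βstar i|) ≤ 3 * ∑ i ∈ S, |βhat i - βstar i| ∧
      (fun i => βhat i - βstar i) ⬝ᵥ Γhat.mulVec (fun i => βhat i - βstar i) ≤
        2 * lam * ∑ i, |βhat i - βstar i| := by
  set v : Fin q → ℝ := fun i => βhat i - βstar i with hv
  -- symmetry swap
  have hswap : ∀ x y : Fin q → ℝ, x ⬝ᵥ Γhat.mulVec y = y ⬝ᵥ Γhat.mulVec x := by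
    intro x y
    rw [Matrix.dotProduct_mulVec, ← Matrix.mulVec_transpose, hsym.eq,
      dotProduct_comm]
  -- positive semidefiniteness
  have ha : (0:ℝ) ≤ v ⬝ᵥ Γhat.mulVec v := by
    simpa using hpsd.dotProduct_mulVec_nonneg v
  -- quadratic expansion
  have hexp : βhat ⬝ᵥ Γhat.mulVec βhat
      = v ⬝ᵥ Γhat.mulVec v + 2 * (v ⬝ᵥ Γhat.mulVec βstar)
        + βstar ⬝ᵥ Γhat.mulVec βstar := by
    have hβ : βhat = v + βstar := by
      funext i; simp [hv]
    rw [hβ, Matrix.mulVec_add, add_dotProduct, dotProduct_add,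
      dotProduct_add, hswap βstar v]
    ring
  -- cross term
  have hdot : βhat ⬝ᵥ γhat - βstar ⬝ᵥ γhat = v ⬝ᵥ γhat := by
    simp [dotProduct, hv, sub_mul, Finset.sum_sub_distrib]
  have hcross : v ⬝ᵥ γhat - v ⬝ᵥ Γhat.mulVec βstar
      = ∑ i, v i * (γhat i - Γhat.mulVec βstar i) := by
    simp [dotProduct, mul_sub, Finset.sum_sub_distrib]
  have hcross_le : v ⬝ᵥ γhat - v ⬝ᵥ Γhat.mulVec βstar ≤ (lam / 4) * ∑ i, |v i| := by
    rw [hcross, Finset.mul_sum]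
    apply Finset.sum_le_sum
    intro i _
    calc v i * (γhat i - Γhat.mulVec βstar i)
        ≤ |v i * (γhat i - Γhat.mulVec βstar i)| := le_abs_self _
      _ = |v i| * |γhat i - Γhat.mulVec βstar i| := abs_mul _ _
      _ ≤ |v i| * (lam / 4) := by
          exact mul_le_mul_of_nonneg_left (hdev i) (abs_nonneg _)
      _ = lam / 4 * |v i| := mul_comm _ _
  -- the basic inequality from minimality at βstar
  have hbasic : v ⬝ᵥ Γhat.mulVec v
      ≤ 2 * (v ⬝ᵥ γhat - v ⬝ᵥ Γhat.mulVec βstar)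
        + lam * (∑ i, |βstar i| - ∑ i, |βhat i|) := by
    have := hmin βstar
    rw [hexp] at this
    nlinarith [hdot]
  -- split the ℓ¹ norms over S and Sᶜ
  have hsplit : ∀ w : Fin q → ℝ, ∑ i, |w i| = ∑ i ∈ S, |w i| + ∑ i ∈ Sᶜ, |w i| := by
    intro w
    rw [Finset.sum_add_sum_compl]
  have hSc0 : ∀ i ∈ Sᶜ, βstar i = 0 := by
    intro i hi
    by_contra h
    exact (Finset.mem_compl.mp hi) ((hS i).mpr h)
  have hl1 : ∑ i, |βstar i| - ∑ i, |βhat i|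
      ≤ ∑ i ∈ S, |v i| - ∑ i ∈ Sᶜ, |v i| := by
    rw [hsplit βstar, hsplit βhat]
    have h1 : ∑ i ∈ S, |βstar i| - ∑ i ∈ S, |βhat i| ≤ ∑ i ∈ S, |v i| := by
      rw [← Finset.sum_sub_distrib]
      apply Finset.sum_le_sum
      intro i _
      have := abs_sub_abs_le_abs_sub (βstar i) (βhat i)
      have : |βstar i - βhat i| = |v i| := by
        rw [hv]; simp [abs_sub_comm]
      linarith [abs_sub_abs_le_abs_sub (βstar i) (βhat i), this.symm ▸ le_refl (|v i|),
        (abs_sub_comm (βstar i) (βhat i))]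
    have h2 : ∑ i ∈ Sᶜ, |βstar i| - ∑ i ∈ Sᶜ, |βhat i| = - ∑ i ∈ Sᶜ, |v i| := by
      rw [← Finset.sum_sub_distrib, ← Finset.sum_neg_distrib]
      apply Finset.sum_congr rfl
      intro i hi
      rw [hSc0 i hi]
      simp [hv, hSc0 i hi]
    linarith
  have hvnn : ∀ (T : Finset (Fin q)), (0:ℝ) ≤ ∑ i ∈ T, |v i| :=
    fun T => Finset.sum_nonneg (fun i _ => abs_nonneg _)
  have hmain : v ⬝ᵥ Γhat.mulVec v
      ≤ (lam / 2) * (∑ i ∈ S, |v i| + ∑ i ∈ Sᶜ, |v i|)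
        + lam * (∑ i ∈ S, |v i| - ∑ i ∈ Sᶜ, |v i|) := by
    have h1 : 2 * (v ⬝ᵥ γhat - v ⬝ᵥ Γhat.mulVec βstar) ≤ (lam/2) * ∑ i, |v i| := by
      linarith [hcross_le]
    have := hsplit v
    nlinarith [hbasic, mul_le_mul_of_nonneg_left hl1 (le_of_lt hlam)]
  constructor
  · nlinarith [hvnn S, hvnn Sᶜ, ha, hmain]
  · have hfull : ∑ i, |v i| = ∑ i ∈ S, |v i| + ∑ i ∈ Sᶜ, |v i| := hsplit v
    nlinarith [hvnn S, hvnn Sᶜ, hmain]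
end

section
/- Let Ê, E ∈ ℝ^{p×r} each have orthonormal columns. Then for every i ∈ {1,…,p}, the Euclidean norm of the i-th row of Ê Êᵀ − E Eᵀ satisfies |φ_iᵀ(Ê Êᵀ − E Eᵀ)|₂ ≤ |φ_iᵀ(Ê − E O)|₂ + |φ_iᵀ E O|₂ · ‖Ê − E O‖₂ for any orthogonal r×r matrix O; in particular it is at most max row norm of Ê − E O plus (max row norm of E)·‖Ê − E O‖₂. -/
open Matrix

private lemma sqrt_sum_norm {n : ℕ} (x : Fin n → ℝ) :
    Real.sqrt (∑ i, (x i) ^ 2) = ‖(WithLp.equiv 2 (Fin n → ℝ)).symm x‖ := by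
  rw [EuclideanSpace.norm_eq]
  congr 1
  refine Finset.sum_congr rfl fun i _ => ?_
  simp [sq_abs]

private lemma sqrt_sum_triangle {n : ℕ} (u v : Fin n → ℝ) :
    Real.sqrt (∑ i, (u i + v i) ^ 2) ≤
      Real.sqrt (∑ i, (u i) ^ 2) + Real.sqrt (∑ i, (v i) ^ 2) := by
  rw [sqrt_sum_norm, sqrt_sum_norm, sqrt_sum_norm]
  have := norm_add_le ((WithLp.equiv 2 (Fin n → ℝ)).symm u)
    ((WithLp.equiv 2 (Fin n → ℝ)).symm v)
  exact this

private lemma sq_sum_mulVec {p r : ℕ} (A : Matrix (Fin p) (Fin r) ℝ)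
    (hA : Aᵀ * A = 1) (w : Fin r → ℝ) :
    ∑ k, (A.mulVec w k) ^ 2 = ∑ j, (w j) ^ 2 := by
  have h1 : ∑ k, (A.mulVec w k) ^ 2 = A.mulVec w ⬝ᵥ A.mulVec w := by
    simp [dotProduct, sq]
  have h2 : ∑ j, (w j) ^ 2 = w ⬝ᵥ w := by simp [dotProduct, sq]
  rw [h1, h2, Matrix.dotProduct_mulVec, ← Matrix.mulVec_transpose,
    Matrix.mulVec_mulVec, hA, Matrix.one_mulVec]

/-- Row-wise bound for the difference of projection matrices:
`|φ_iᵀ(Ê Êᵀ − E Eᵀ)|₂ ≤ |φ_iᵀ(Ê − EO)|₂ + |φ_iᵀ EO|₂ ‖Ê − EO‖₂`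
for any orthogonal `O`, where `s` is an upper bound on `‖Ê − EO‖₂`
stated via the operator characterization. -/
theorem projection_row_diff_bound {p r : ℕ}
    (Ehat E : Matrix (Fin p) (Fin r) ℝ)
    (hEhat : Ehatᵀ * Ehat = 1) (hE : Eᵀ * E = 1)
    (O : Matrix (Fin r) (Fin r) ℝ) (hO : Oᵀ * O = 1)
    (s : ℝ) (hs0 : 0 ≤ s)
    (hs : ∀ v : Fin r → ℝ,
      Real.sqrt (∑ i, ((Ehat - E * O).mulVec v i) ^ 2) ≤
        s * Real.sqrt (∑ j, (v j) ^ 2)) :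
    ∀ i, Real.sqrt (∑ k, ((Ehat * Ehatᵀ - E * Eᵀ) i k) ^ 2) ≤
      Real.sqrt (∑ j, ((Ehat - E * O) i j) ^ 2) +
        Real.sqrt (∑ j, ((E * O) i j) ^ 2) * s := by
  intro i
  set A := Ehat - E * O with hAdef
  have hOO : O * Oᵀ = 1 := mul_eq_one_comm.mp hO
  have hdecomp : Ehat * Ehatᵀ - E * Eᵀ = A * Ehatᵀ + (E * O) * Aᵀ := by
    have : (E * O) * (E * O)ᵀ = E * Eᵀ := by
      rw [Matrix.transpose_mul, Matrix.mul_assoc, ← Matrix.mul_assoc O, hOO,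
        Matrix.one_mul]
    simp only [hAdef, Matrix.sub_mul, Matrix.transpose_sub, Matrix.mul_sub, this]
    abel
  -- rewrite row i
  have hrow : ∀ k, (Ehat * Ehatᵀ - E * Eᵀ) i k =
      Ehat.mulVec (A i) k + A.mulVec ((E * O) i) k := by
    intro k
    rw [hdecomp]
    simp [Matrix.mul_apply, Matrix.mulVec, dotProduct, mul_comm]
  calc Real.sqrt (∑ k, ((Ehat * Ehatᵀ - E * Eᵀ) i k) ^ 2)
      = Real.sqrt (∑ k, (Ehat.mulVec (A i) k + A.mulVec ((E * O) i) k) ^ 2) := by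
        congr 1; exact Finset.sum_congr rfl fun k _ => by rw [hrow]
    _ ≤ Real.sqrt (∑ k, (Ehat.mulVec (A i) k) ^ 2) +
        Real.sqrt (∑ k, (A.mulVec ((E * O) i) k) ^ 2) := sqrt_sum_triangle _ _
    _ ≤ Real.sqrt (∑ j, (A i j) ^ 2) +
        Real.sqrt (∑ j, ((E * O) i j) ^ 2) * s := by
        gcongr ?_ + ?_
        · rw [sq_sum_mulVec Ehat hEhat]
        · calc Real.sqrt (∑ k, (A.mulVec ((E * O) i) k) ^ 2)
              ≤ s * Real.sqrt (∑ j, ((E * O) i j) ^ 2) := hs _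
            _ = Real.sqrt (∑ j, ((E * O) i j) ^ 2) * s := mul_comm _ _
end

section
/- Suppose Γ̂, Γ are symmetric q×q matrices with |Γ̂ − Γ|_∞ ≤ δ and Λ_min(Γ) ≥ 2κ for some κ > 0. Then for every vector v ∈ ℝ^q satisfying |v|₁ ≤ 4√s |v|₂ with 16 s δ ≤ κ, it holds that vᵀ Γ̂ v ≥ κ |v|₂². -/
open Matrix

/-- Restricted eigenvalue condition transfer: if `|Γ̂ − Γ|_∞ ≤ δ`,
`Λ_min(Γ) ≥ 2κ`, and `16 s δ ≤ κ`, then `vᵀ Γ̂ v ≥ κ |v|₂²` for all `v`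
satisfying the cone-type inequality `|v|₁ ≤ 4 √s |v|₂`. -/
theorem restricted_eigenvalue_transfer {q : ℕ}
    (Γhat Γ : Matrix (Fin q) (Fin q) ℝ) (hΓhat : Γhat.IsSymm) (hΓ : Γ.IsHermitian)
    (δ κ : ℝ) (hδ : 0 ≤ δ) (hκ : 0 < κ) (s : ℕ) (hs : 1 ≤ s)
    (hdiff : ∀ i j, |Γhat i j - Γ i j| ≤ δ)
    (hmin : ∀ i, 2 * κ ≤ hΓ.eigenvalues i)
    (hsparse : 16 * (s : ℝ) * δ ≤ κ) :
    ∀ v : Fin q → ℝ,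
      (∑ i, |v i|) ≤ 4 * Real.sqrt s * Real.sqrt (∑ i, (v i) ^ 2) →
      κ * ∑ i, (v i) ^ 2 ≤ v ⬝ᵥ Γhat.mulVec v := by
  intro v hv
  set L2 := ∑ i, (v i) ^ 2 with hL2def
  have hL2nn : 0 ≤ L2 := Finset.sum_nonneg fun i _ => sq_nonneg _
  have hL1nn : 0 ≤ ∑ i, |v i| := Finset.sum_nonneg fun i _ => abs_nonneg _
  -- cone inequality squared
  have hL1sq : (∑ i, |v i|) ^ 2 ≤ 16 * (s : ℝ) * L2 := by
    calc (∑ i, |v i|) ^ 2 ≤ (4 * Real.sqrt s * Real.sqrt L2) ^ 2 :=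
          pow_le_pow_left₀ hL1nn hv 2
      _ = 16 * (s : ℝ) * L2 := by
          rw [mul_pow, mul_pow, Real.sq_sqrt (Nat.cast_nonneg s), Real.sq_sqrt hL2nn]; ring
  -- spectral lower bound for Γ
  have hPSD : (Γ - (2 * κ) • 1).PosSemidef := by
    set U := (hΓ.eigenvectorUnitary : Matrix (Fin q) (Fin q) ℝ) with hU
    have hUU : U * Uᴴ = 1 := mem_unitaryGroup_iff.mp hΓ.eigenvectorUnitary.2
    have hrep : Γ - (2 * κ) • 1
        = U * diagonal (fun i => hΓ.eigenvalues i - 2 * κ) * Uᴴ := by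
      have hspec : Γ = U * diagonal (RCLike.ofReal ∘ hΓ.eigenvalues) * Uᴴ :=
        hΓ.spectral_theorem
      have hdiag : diagonal (fun i => hΓ.eigenvalues i - 2 * κ)
          = diagonal (RCLike.ofReal ∘ hΓ.eigenvalues) - (2 * κ) • 1 := by
        ext i j
        by_cases h : i = j <;> simp [diagonal, Matrix.one_apply, h]
      rw [hdiag, Matrix.mul_sub, Matrix.sub_mul, Matrix.mul_smul, Matrix.smul_mul,
        mul_one, hUU, ← hspec]
    rw [hrep]
    exact (PosSemidef.diagonal fun i => sub_nonneg.mpr (hmin i)).mul_mul_conjTranspose_same U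
  have hΓlow : 2 * κ * L2 ≤ v ⬝ᵥ Γ.mulVec v := by
    have h0 := hPSD.dotProduct_mulVec_nonneg v
    have hsv : star v = v := star_trivial v
    rw [hsv, Matrix.sub_mulVec, Matrix.smul_mulVec, Matrix.one_mulVec,
      dotProduct_sub, dotProduct_smul] at h0
    have hdp : v ⬝ᵥ v = L2 := by
      simp [dotProduct, hL2def, sq]
    rw [hdp] at h0
    simpa using sub_nonneg.mp h0
  -- perturbation bound
  have hpert : v ⬝ᵥ Γ.mulVec v - v ⬝ᵥ Γhat.mulVec v ≤ δ * (∑ i, |v i|) ^ 2 := by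
    have heq : v ⬝ᵥ Γ.mulVec v - v ⬝ᵥ Γhat.mulVec v
        = ∑ i, ∑ j, v i * (Γ i j - Γhat i j) * v j := by
      simp only [dotProduct, mulVec, Finset.mul_sum, ← Finset.sum_sub_distrib]
      congr 1; ext i; congr 1; ext j; ring
    rw [heq]
    have hbound : ∀ i j, v i * (Γ i j - Γhat i j) * v j ≤ |v i| * δ * |v j| := by
      intro i j
      calc v i * (Γ i j - Γhat i j) * v j ≤ |v i * (Γ i j - Γhat i j) * v j| := le_abs_self _
        _ = |v i| * |Γ i j - Γhat i j| * |v j| := by rw [abs_mul, abs_mul]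
        _ ≤ |v i| * δ * |v j| := by
            have := hdiff i j
            rw [abs_sub_comm] at this
            exact mul_le_mul_of_nonneg_right
              (mul_le_mul_of_nonneg_left this (abs_nonneg _)) (abs_nonneg _)
    calc ∑ i, ∑ j, v i * (Γ i j - Γhat i j) * v j
        ≤ ∑ i, ∑ j, |v i| * δ * |v j| := by
          refine Finset.sum_le_sum fun i _ => Finset.sum_le_sum fun j _ => hbound i j
      _ = δ * (∑ i, |v i|) ^ 2 := by
          simp only [← Finset.sum_mul, ← Finset.mul_sum]
          ring
  nlinarith [mul_le_mul_of_nonneg_left hL1sq hδ, mul_le_mul_of_nonneg_right hsparse hL2nn]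
end

section
/- Let f: [−π, π] → ℂ^{p×p} be the spectral density of a stationary VAR(d) process ξ_t = A₁ξ_{t−1} + ⋯ + A_d ξ_{t−d} + ε_t with Cov(ε_t) = Σ_ε, given by f(ω) = (2π)^{−1} 𝒜(e^{−iω})^{−1} Σ_ε (𝒜(e^{−iω})^{−1})^*, where 𝒜(z) = I − Σ_ℓ A_ℓ z^ℓ has no roots on or inside the unit circle. Then for all ω, (2π)^{−1} Λ_min(Σ_ε)/μ_max(𝒜) ≤ Λ_min(f(ω)) ≤ Λ_max(f(ω)) ≤ (2π)^{−1} Λ_max(Σ_ε)/μ_min(𝒜), where μ_min(𝒜) = min_{|z|=1} Λ_min(𝒜*(z)𝒜(z)) and μ_max(𝒜) = max_{|z|=1} Λ_max(𝒜*(z)𝒜(z)). -/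
open Matrix
open scoped ComplexOrder

lemma re_star_dot {p : ℕ} (x : Fin p → ℂ) : (star x ⬝ᵥ x).re = ∑ i, ‖x i‖^2 := by
  simp [dotProduct, Complex.mul_conj', Complex.sq_norm,
    Complex.re_sum, Complex.normSq_apply]

lemma cs_dot {p : ℕ} (u x : Fin p → ℂ) :
    (star u ⬝ᵥ x).re ≤ Real.sqrt (∑ i, ‖u i‖^2) * Real.sqrt (∑ i, ‖x i‖^2) := by
  have h := norm_inner_le_norm (𝕜 := ℂ) ((WithLp.equiv 2 (Fin p → ℂ)).symm u)
    ((WithLp.equiv 2 (Fin p → ℂ)).symm x)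
  rw [show inner ℂ ((WithLp.equiv 2 (Fin p → ℂ)).symm u) ((WithLp.equiv 2 (Fin p → ℂ)).symm x) = star u ⬝ᵥ x from
    (EuclideanSpace.inner_toLp_toLp u x).trans (dotProduct_comm _ _)] at h
  have h1 : ‖(WithLp.equiv 2 (Fin p → ℂ)).symm u‖ = Real.sqrt (∑ i, ‖u i‖^2) := by
    rw [EuclideanSpace.norm_eq]; rfl
  have h2 : ‖(WithLp.equiv 2 (Fin p → ℂ)).symm x‖ = Real.sqrt (∑ i, ‖x i‖^2) := by
    rw [EuclideanSpace.norm_eq]; rfl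
  calc (star u ⬝ᵥ x).re ≤ ‖star u ⬝ᵥ x‖ := Complex.re_le_norm _
    _ ≤ _ := by rw [← h1, ← h2]; exact h

lemma nsum_nonneg {p : ℕ} (u : Fin p → ℂ) : 0 ≤ ∑ i, ‖u i‖^2 :=
  Finset.sum_nonneg fun _ _ => sq_nonneg _

lemma sq_le_aux (a b s : ℝ) (ha : 0 ≤ a) (hb : 0 ≤ b) (hs : 0 ≤ s)
    (h : a^2 ≤ b * (s * a)) : a^2 ≤ s^2 * b^2 := by
  rcases eq_or_lt_of_le ha with h0 | h0
  · nlinarith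
  · have : a ≤ s * b := by nlinarith
    nlinarith

lemma adj_bd {p : ℕ} (M : Matrix (Fin p) (Fin p) ℂ) (C : ℝ) (hC : 0 ≤ C)
    (h : ∀ u, ∑ i, ‖(M *ᵥ u) i‖^2 ≤ C * ∑ i, ‖u i‖^2) (u : Fin p → ℂ) :
    ∑ i, ‖(Mᴴ *ᵥ u) i‖^2 ≤ C * ∑ i, ‖u i‖^2 := by
  have hsx : star (Mᴴ *ᵥ u) = star u ᵥ* M := by
    rw [Matrix.star_mulVec, Matrix.conjTranspose_conjTranspose]
  have key : star (Mᴴ *ᵥ u) ⬝ᵥ (Mᴴ *ᵥ u) = star u ⬝ᵥ (M *ᵥ (Mᴴ *ᵥ u)) := by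
    rw [Matrix.dotProduct_mulVec, hsx]; simp [Matrix.dotProduct_mulVec]
  have hb : (∑ i, ‖(Mᴴ *ᵥ u) i‖^2)
      ≤ Real.sqrt (∑ i, ‖u i‖^2) * Real.sqrt (∑ i, ‖(M *ᵥ (Mᴴ *ᵥ u)) i‖^2) := by
    rw [← re_star_dot, key]; exact cs_dot u _
  have hMx : Real.sqrt (∑ i, ‖(M *ᵥ (Mᴴ *ᵥ u)) i‖^2)
      ≤ Real.sqrt C * Real.sqrt (∑ i, ‖(Mᴴ *ᵥ u) i‖^2) := by
    rw [← Real.sqrt_mul hC]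
    exact Real.sqrt_le_sqrt (h _)
  have hbound : Real.sqrt (∑ i, ‖(Mᴴ *ᵥ u) i‖^2) ^ 2
      ≤ Real.sqrt (∑ i, ‖u i‖^2) * (Real.sqrt C * Real.sqrt (∑ i, ‖(Mᴴ *ᵥ u) i‖^2)) := by
    rw [Real.sq_sqrt (nsum_nonneg _)]
    exact hb.trans (mul_le_mul_of_nonneg_left hMx (Real.sqrt_nonneg _))
  have hfin := sq_le_aux (Real.sqrt (∑ i, ‖(Mᴴ *ᵥ u) i‖^2)) (Real.sqrt (∑ i, ‖u i‖^2))
    (Real.sqrt C) (Real.sqrt_nonneg _) (Real.sqrt_nonneg _) (Real.sqrt_nonneg _) hbound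
  rwa [Real.sq_sqrt (nsum_nonneg _), Real.sq_sqrt hC, Real.sq_sqrt (nsum_nonneg _)] at hfin

/-- The (real part of the) Hermitian quadratic form `v ↦ vᴴ H v`. -/
noncomputable def quadForm {p : ℕ} (H : Matrix (Fin p) (Fin p) ℂ) (v : Fin p → ℂ) : ℝ :=
  (star v ⬝ᵥ H.mulVec v).re

lemma quadForm_mul_self {p : ℕ} (M : Matrix (Fin p) (Fin p) ℂ) (u : Fin p → ℂ) :
    quadForm (Mᴴ * M) u = ∑ i, ‖(M *ᵥ u) i‖^2 := by
  unfold quadForm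
  rw [show (Mᴴ * M).mulVec u = Mᴴ *ᵥ (M *ᵥ u) from (Matrix.mulVec_mulVec u Mᴴ M).symm,
    Matrix.dotProduct_mulVec, ← Matrix.star_mulVec, re_star_dot]

/-- Uniform eigenvalue bounds for the spectral density of a stable VAR(d) process
(Basu & Michailidis, eq. (2.6)): for all frequencies `ω`,
`(2π)⁻¹ Λ_min(Σ_ε)/μ_max(𝒜) ≤ Λ_min(f(ω)) ≤ Λ_max(f(ω)) ≤ (2π)⁻¹ Λ_max(Σ_ε)/μ_min(𝒜)`,
stated via Rayleigh quotients:  `lmin, lmax` bound the quadratic form of `Σ_ε`,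
and `μmin, μmax` bound the quadratic form of `𝒜*(z)𝒜(z)` on the unit circle. -/
theorem var_spectral_density_eigenvalue_bounds {p d : ℕ}
    (A : Fin d → Matrix (Fin p) (Fin p) ℂ)
    (hAreal : ∀ ℓ i j, (A ℓ i j).im = 0)
    (Sigε : Matrix (Fin p) (Fin p) ℂ) (hSig : Sigε.PosDef)
    (𝒜 : ℂ → Matrix (Fin p) (Fin p) ℂ)
    (h𝒜 : ∀ z, 𝒜 z = 1 - ∑ ℓ : Fin d, z ^ ((ℓ : ℕ) + 1) • A ℓ)
    (hstable : ∀ z : ℂ, ‖z‖ ≤ 1 → IsUnit (𝒜 z))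
    (f : ℝ → Matrix (Fin p) (Fin p) ℂ)
    (hf : ∀ ω : ℝ, f ω = ((2 * Real.pi)⁻¹ : ℝ) •
      ((𝒜 (Complex.exp (-Complex.I * (ω : ℂ))))⁻¹ * Sigε *
        ((𝒜 (Complex.exp (-Complex.I * (ω : ℂ))))⁻¹)ᴴ))
    (lmin lmax μmin μmax : ℝ) (hμmin : 0 < μmin) (hμmax : 0 < μmax)
    (hlmin : ∀ v : Fin p → ℂ, lmin * (∑ i, ‖v i‖ ^ 2) ≤ quadForm Sigε v)
    (hlmax : ∀ v : Fin p → ℂ, quadForm Sigε v ≤ lmax * (∑ i, ‖v i‖ ^ 2))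
    (hμmin' : ∀ z : ℂ, ‖z‖ = 1 →
      ∀ v : Fin p → ℂ, μmin * (∑ i, ‖v i‖ ^ 2) ≤ quadForm ((𝒜 z)ᴴ * 𝒜 z) v)
    (hμmax' : ∀ z : ℂ, ‖z‖ = 1 →
      ∀ v : Fin p → ℂ, quadForm ((𝒜 z)ᴴ * 𝒜 z) v ≤ μmax * (∑ i, ‖v i‖ ^ 2)) :
    ∀ (ω : ℝ) (v : Fin p → ℂ),
      (2 * Real.pi)⁻¹ * lmin / μmax * (∑ i, ‖v i‖ ^ 2) ≤ quadForm (f ω) v ∧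
        quadForm (f ω) v ≤ (2 * Real.pi)⁻¹ * lmax / μmin * (∑ i, ‖v i‖ ^ 2) := by
  intro ω v
  have hπ : (0:ℝ) < (2 * Real.pi)⁻¹ := by
    have := Real.pi_pos; positivity
  set z : ℂ := Complex.exp (-Complex.I * (ω : ℂ)) with hzdef
  have hz1 : ‖z‖ = 1 := by
    rw [hzdef, Complex.norm_exp]
    simp
  have hunit := hstable z hz1.le
  have hdet : IsUnit (𝒜 z).det := (Matrix.isUnit_iff_isUnit_det _).mp hunit
  have hMinv : 𝒜 z * (𝒜 z)⁻¹ = 1 := Matrix.mul_nonsing_inv _ hdet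
  have hinvM : (𝒜 z)⁻¹ * 𝒜 z = 1 := Matrix.nonsing_inv_mul _ hdet
  -- quadratic-form bounds for M = 𝒜 z
  have hup : ∀ u : Fin p → ℂ, ∑ i, ‖(𝒜 z *ᵥ u) i‖^2 ≤ μmax * ∑ i, ‖u i‖^2 := fun u => by
    rw [← quadForm_mul_self]; exact hμmax' z hz1 u
  have hlo : ∀ u : Fin p → ℂ, μmin * (∑ i, ‖u i‖^2) ≤ ∑ i, ‖(𝒜 z *ᵥ u) i‖^2 := fun u => by
    rw [← quadForm_mul_self]; exact hμmin' z hz1 u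
  have hadjup : ∀ u : Fin p → ℂ, ∑ i, ‖((𝒜 z)ᴴ *ᵥ u) i‖^2 ≤ μmax * ∑ i, ‖u i‖^2 :=
    adj_bd _ _ hμmax.le hup
  have hinvb : ∀ x : Fin p → ℂ, ∑ i, ‖((𝒜 z)⁻¹ *ᵥ x) i‖^2 ≤ μmin⁻¹ * ∑ i, ‖x i‖^2 := by
    intro x
    have h0 := hlo ((𝒜 z)⁻¹ *ᵥ x)
    rw [Matrix.mulVec_mulVec, hMinv, Matrix.one_mulVec] at h0
    rw [inv_mul_eq_div, le_div_iff₀ hμmin]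
    nlinarith
  have hadjinv : ∀ x : Fin p → ℂ,
      ∑ i, ‖(((𝒜 z)⁻¹)ᴴ *ᵥ x) i‖^2 ≤ μmin⁻¹ * ∑ i, ‖x i‖^2 :=
    adj_bd _ _ (inv_nonneg.mpr hμmin.le) hinvb
  set w : Fin p → ℂ := ((𝒜 z)⁻¹)ᴴ *ᵥ v with hwdef
  have hvw : (𝒜 z)ᴴ *ᵥ w = v := by
    rw [hwdef, Matrix.mulVec_mulVec, ← Matrix.conjTranspose_mul, hinvM,
      Matrix.conjTranspose_one, Matrix.one_mulVec]
  have h1 : (∑ i, ‖v i‖^2) ≤ μmax * ∑ i, ‖w i‖^2 := by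
    conv_lhs => rw [← hvw]
    exact hadjup w
  have h2 : μmin * (∑ i, ‖w i‖^2) ≤ ∑ i, ‖v i‖^2 := by
    have h0 := hadjinv v
    rw [← hwdef, inv_mul_eq_div, le_div_iff₀ hμmin] at h0
    nlinarith
  -- quadForm identity
  have hsw : star w = star v ᵥ* (𝒜 z)⁻¹ := by
    rw [hwdef, Matrix.star_mulVec, Matrix.conjTranspose_conjTranspose]
  have hdot : star v ⬝ᵥ ((𝒜 z)⁻¹ * Sigε * ((𝒜 z)⁻¹)ᴴ) *ᵥ v = star w ⬝ᵥ Sigε *ᵥ w := by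
    rw [show ((𝒜 z)⁻¹ * Sigε * ((𝒜 z)⁻¹)ᴴ) *ᵥ v
        = (𝒜 z)⁻¹ *ᵥ (Sigε *ᵥ (((𝒜 z)⁻¹)ᴴ *ᵥ v)) by
      rw [Matrix.mulVec_mulVec, Matrix.mulVec_mulVec]]
    rw [Matrix.dotProduct_mulVec, ← hsw, ← hwdef]
  have hfq : quadForm (f ω) v = (2 * Real.pi)⁻¹ * quadForm Sigε w := by
    rw [hf ω]
    unfold quadForm
    rw [Matrix.smul_mulVec, dotProduct_smul, ← hzdef, hdot]
    simp [Complex.smul_re]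
  have hS0 : 0 ≤ quadForm Sigε w := hSig.posSemidef.re_dotProduct_nonneg w
  have hnv : 0 ≤ ∑ i, ‖v i‖^2 := nsum_nonneg v
  have hnw : 0 ≤ ∑ i, ‖w i‖^2 := nsum_nonneg w
  constructor
  · rw [hfq]
    rcases le_or_gt lmin 0 with hl | hl
    · have hL : (2 * Real.pi)⁻¹ * lmin / μmax * (∑ i, ‖v i‖^2) ≤ 0 := by
        apply mul_nonpos_of_nonpos_of_nonneg _ hnv
        apply div_nonpos_of_nonpos_of_nonneg _ hμmax.le
        exact mul_nonpos_of_nonneg_of_nonpos hπ.le hl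
      exact hL.trans (mul_nonneg hπ.le hS0)
    · rw [div_mul_eq_mul_div, div_le_iff₀ hμmax]
      have hA := mul_le_mul_of_nonneg_left h1 (by positivity : (0:ℝ) ≤ (2 * Real.pi)⁻¹ * lmin)
      have hB := mul_le_mul_of_nonneg_left (hlmin w)
        (by positivity : (0:ℝ) ≤ (2 * Real.pi)⁻¹ * μmax)
      nlinarith
  · rw [hfq]
    rw [div_mul_eq_mul_div, le_div_iff₀ hμmin]
    rcases eq_or_lt_of_le hnw with hnw0 | hnw0
    · have hwz : lmax * (∑ i, ‖w i‖^2) = 0 := by rw [← hnw0]; ring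
      have hS0' : quadForm Sigε w = 0 := le_antisymm (by rw [← hwz] at *; linarith [hlmax w]) hS0
      have hnv0 : (∑ i, ‖v i‖^2) = 0 := le_antisymm (by nlinarith [h1]) hnv
      rw [hS0', hnv0]; ring_nf; exact le_refl 0
    · have hlmax0 : 0 ≤ lmax := by
        by_contra hc
        push_neg at hc
        nlinarith [hlmax w, hS0]
      have hA := mul_le_mul_of_nonneg_left (hlmax w)
        (by positivity : (0:ℝ) ≤ (2 * Real.pi)⁻¹ * μmin)
      have hB := mul_le_mul_of_nonneg_left h2
        (mul_nonneg hπ.le hlmax0)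
      nlinarith
end
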